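/- Every braided harmonic vase BHV((pᵢ, wᵢ)ᵢ) is a compact subset of ℝ⁴. -/

import Mathlib

open Real Set

noncomputable section

/-- The pedestal of a braided harmonic vase: the disc of radius 3 in the plane
`z = w = 0` in `ℝ⁴`. -/
def BHVpedestal : Set (ℝ × ℝ × ℝ × ℝ) :=
  {q | q.1 ^ 2 + q.2.1 ^ 2 ≤ 9 ∧ q.2.2.1 = 0 ∧ q.2.2.2 = 0}

/-- The wall of a harmonic vase in `ℝ⁴` with height `m`, parameter `p` and braiding
function `w` (the fourth coordinate is `|φ| * w z`). -/
def BHVwall (p : ℝ) (w : ℝ → ℝ) (m : ℝ) : Set (ℝ × ℝ × ℝ × ℝ) :=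
  {q | ∃ z ∈ Set.Ioc (0 : ℝ) m, ∃ φ ∈ Set.Icc (-π) π,
    q = ((|φ| / π * Real.sin (π * p / z) + 2) * Real.cos φ,
         (|φ| / π * Real.sin (π * p / z) + 2) * Real.sin φ, z, |φ| * w z)}

/-- The braided harmonic vase determined by parameters `p i` and braiding functions
`w i` (only the indices `i ≥ 1` are used; the `i`-th wall has height `1/i`). -/
def BHV (p : ℕ → ℝ) (w : ℕ → ℝ → ℝ) : Set (ℝ × ℝ × ℝ × ℝ) :=
  BHVpedestal ∪ ⋃ i : ℕ, BHVwall (p (i + 1)) (w (i + 1)) (1 / (i + 1 : ℝ))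

/-- The hypotheses on the data `(pᵢ, wᵢ)` of a braided harmonic vase: the `pᵢ` are
positive and pairwise algebraically independent over `ℚ`, and the `wᵢ` are continuous
self-maps `(0,1/i] → [0,1/i]` with `wᵢ(x) < x`, with `wᵢ(x) ≠ wⱼ(x)` (`j < i`) at heights
where the walls `i` and `j` would meet, and vanishing near every inner-height of `pᵢ`. -/
structure IsBHVData (p : ℕ → ℝ) (w : ℕ → ℝ → ℝ) : Prop where
  pos : ∀ i : ℕ, 1 ≤ i → 0 < p i
  algInd : ∀ i j : ℕ, 1 ≤ i → 1 ≤ j → i ≠ j → AlgebraicIndependent ℚ ![p i, p j]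
  contOn : ∀ i : ℕ, 1 ≤ i → ContinuousOn (w i) (Set.Ioc (0 : ℝ) (1 / (i : ℝ)))
  mapsTo : ∀ i : ℕ, 1 ≤ i → ∀ x ∈ Set.Ioc (0 : ℝ) (1 / (i : ℝ)),
    w i x ∈ Set.Icc (0 : ℝ) (1 / (i : ℝ))
  lt : ∀ i : ℕ, 1 ≤ i → ∀ x ∈ Set.Ioc (0 : ℝ) (1 / (i : ℝ)), w i x < x
  ne : ∀ i j : ℕ, 1 ≤ j → j < i → ∀ x ∈ Set.Ioc (0 : ℝ) (1 / (i : ℝ)),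
    Real.sin (π * p i / x) = Real.sin (π * p j / x) → w i x ≠ w j x
  innerZero : ∀ i : ℕ, 1 ≤ i → ∀ h ∈ Set.Ioc (0 : ℝ) (1 / (i : ℝ)),
    Real.sin (π * p i / h) = -1 → ∀ᶠ x in nhds h, w i x = 0

/-- Basic bounds for points on a wall. -/
lemma BHVwall_bounds {p' : ℝ} {w' : ℝ → ℝ} {m : ℝ}
    (hw : ∀ x ∈ Set.Ioc (0 : ℝ) m, 0 ≤ w' x ∧ w' x < x)
    {q : ℝ × ℝ × ℝ × ℝ} (hq : q ∈ BHVwall p' w' m) :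
    q.1 ^ 2 + q.2.1 ^ 2 ≤ 9 ∧ q.2.2.1 ∈ Set.Ioc (0 : ℝ) m ∧
      0 ≤ q.2.2.2 ∧ q.2.2.2 ≤ π * q.2.2.1 := by
  obtain ⟨z, hz, φ, hφ, rfl⟩ := hq
  have hπ : (0 : ℝ) < π := Real.pi_pos
  have habs : |φ| ≤ π := abs_le.2 hφ
  have h0φ : 0 ≤ |φ| := abs_nonneg φ
  have hd1 : 0 ≤ |φ| / π := div_nonneg h0φ hπ.le
  have hd2 : |φ| / π ≤ 1 := div_le_one_of_le₀ habs hπ.le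
  have hs := Real.neg_one_le_sin (π * p' / z)
  have hs' := Real.sin_le_one (π * p' / z)
  set r : ℝ := |φ| / π * Real.sin (π * p' / z) + 2 with hr
  have hlo : -(|φ| / π) ≤ |φ| / π * Real.sin (π * p' / z) := by
    have := mul_le_mul_of_nonneg_left hs hd1
    linarith
  have hhi : |φ| / π * Real.sin (π * p' / z) ≤ |φ| / π := by
    have := mul_le_mul_of_nonneg_left hs' hd1
    linarith
  have hr1 : (1 : ℝ) ≤ r := by rw [hr]; linarith
  have hr3 : r ≤ 3 := by rw [hr]; linarith
  have hr9 : r ^ 2 ≤ 9 := by nlinarith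
  obtain ⟨hw0, hwlt⟩ := hw z hz
  refine ⟨?_, hz, mul_nonneg h0φ hw0, ?_⟩
  · have hpc := Real.sin_sq_add_cos_sq φ
    calc (r * Real.cos φ) ^ 2 + (r * Real.sin φ) ^ 2
        = r ^ 2 * (Real.sin φ ^ 2 + Real.cos φ ^ 2) := by ring
      _ = r ^ 2 := by rw [hpc, mul_one]
      _ ≤ 9 := hr9
  · exact mul_le_mul habs hwlt.le hw0 hπ.le

lemma BHVpedestal_isClosed : IsClosed BHVpedestal := by
  have h1 : IsClosed {q : ℝ × ℝ × ℝ × ℝ | q.1 ^ 2 + q.2.1 ^ 2 ≤ 9} :=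
    isClosed_le (by fun_prop) continuous_const
  have h2 : IsClosed {q : ℝ × ℝ × ℝ × ℝ | q.2.2.1 = 0} :=
    isClosed_eq (by fun_prop) continuous_const
  have h3 : IsClosed {q : ℝ × ℝ × ℝ × ℝ | q.2.2.2 = 0} :=
    isClosed_eq (by fun_prop) continuous_const
  have : BHVpedestal =
      {q : ℝ × ℝ × ℝ × ℝ | q.1 ^ 2 + q.2.1 ^ 2 ≤ 9} ∩
        ({q : ℝ × ℝ × ℝ × ℝ | q.2.2.1 = 0} ∩ {q : ℝ × ℝ × ℝ × ℝ | q.2.2.2 = 0}) := by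
    ext q; simp [BHVpedestal, and_assoc]
  rw [this]
  exact h1.inter (h2.inter h3)

/-- Limits of sequences lying in a single wall lie in the wall or the pedestal. -/
lemma BHVwall_limit {p' : ℝ} {w' : ℝ → ℝ} {m : ℝ}
    (hcont : ContinuousOn w' (Set.Ioc (0 : ℝ) m))
    (hw : ∀ x ∈ Set.Ioc (0 : ℝ) m, 0 ≤ w' x ∧ w' x < x)
    {y : ℕ → ℝ × ℝ × ℝ × ℝ} {q : ℝ × ℝ × ℝ × ℝ}
    (hy : ∀ n, y n ∈ BHVwall p' w' m)
    (hq : Filter.Tendsto y Filter.atTop (nhds q)) :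
    q ∈ BHVpedestal ∪ BHVwall p' w' m := by
  choose z hz φ hφ hyeq using hy
  have hK : IsCompact ((Set.Icc (0 : ℝ) m) ×ˢ (Set.Icc (-π) π)) :=
    isCompact_Icc.prod isCompact_Icc
  have hmem : ∀ n, (z n, φ n) ∈ (Set.Icc (0 : ℝ) m) ×ˢ (Set.Icc (-π) π) :=
    fun n => ⟨⟨(hz n).1.le, (hz n).2⟩, hφ n⟩
  obtain ⟨a, ha, ns, hns, hlim⟩ := hK.tendsto_subseq hmem
  have hza : Filter.Tendsto (fun k => z (ns k)) Filter.atTop (nhds a.1) :=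
    (continuous_fst.tendsto a).comp hlim
  have hφa : Filter.Tendsto (fun k => φ (ns k)) Filter.atTop (nhds a.2) :=
    (continuous_snd.tendsto a).comp hlim
  have hyq : Filter.Tendsto (fun k => y (ns k)) Filter.atTop (nhds q) :=
    hq.comp hns.tendsto_atTop
  have h3t : Filter.Tendsto (fun k => (y (ns k)).2.2.1) Filter.atTop (nhds q.2.2.1) :=
    ((continuous_fst.comp (continuous_snd.comp continuous_snd)).tendsto q).comp hyq
  have h4t : Filter.Tendsto (fun k => (y (ns k)).2.2.2) Filter.atTop (nhds q.2.2.2) :=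
    ((continuous_snd.comp (continuous_snd.comp continuous_snd)).tendsto q).comp hyq
  have h3eq : (fun k => (y (ns k)).2.2.1) = fun k => z (ns k) := by
    funext k; rw [hyeq]
  have h4eq : (fun k => (y (ns k)).2.2.2) = fun k => |φ (ns k)| * w' (z (ns k)) := by
    funext k; rw [hyeq]
  rcases eq_or_lt_of_le ha.1.1 with h0 | h0
  · -- the heights tend to 0 : the limit is on the pedestal
    left
    have hz0 : Filter.Tendsto (fun k => z (ns k)) Filter.atTop (nhds 0) := h0 ▸ hza
    have hw0 : Filter.Tendsto (fun k => w' (z (ns k))) Filter.atTop (nhds 0) :=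
      squeeze_zero (fun k => (hw _ (hz (ns k))).1) (fun k => (hw _ (hz (ns k))).2.le) hz0
    have h4z : Filter.Tendsto (fun k => |φ (ns k)| * w' (z (ns k))) Filter.atTop (nhds 0) := by
      refine squeeze_zero (fun k => mul_nonneg (abs_nonneg _) (hw _ (hz (ns k))).1)
        (fun k => ?_) (by simpa using hw0.const_mul π)
      exact mul_le_mul_of_nonneg_right (abs_le.2 (hφ (ns k))) (hw _ (hz (ns k))).1
    have hq3 : q.2.2.1 = 0 := tendsto_nhds_unique (h3eq ▸ h3t) hz0
    have hq4 : q.2.2.2 = 0 := tendsto_nhds_unique (h4eq ▸ h4t) h4z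
    have hle : q.1 ^ 2 + q.2.1 ^ 2 ≤ 9 := by
      have hcontf : Continuous fun q' : ℝ × ℝ × ℝ × ℝ => q'.1 ^ 2 + q'.2.1 ^ 2 := by fun_prop
      refine le_of_tendsto ((hcontf.tendsto q).comp hyq) (Filter.Eventually.of_forall fun k => ?_)
      exact (BHVwall_bounds hw ⟨z (ns k), hz _, φ (ns k), hφ _, hyeq _⟩).1
    exact ⟨hle, hq3, hq4⟩
  · -- positive limiting height : the limit is on the wall
    right
    have haIoc : a.1 ∈ Set.Ioc (0 : ℝ) m := ⟨h0, ha.1.2⟩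
    refine ⟨a.1, haIoc, a.2, ha.2, ?_⟩
    have hsin : Filter.Tendsto (fun k => Real.sin (π * p' / z (ns k))) Filter.atTop
        (nhds (Real.sin (π * p' / a.1))) :=
      (Real.continuous_sin.tendsto _).comp (tendsto_const_nhds.div hza h0.ne')
    have hwz : Filter.Tendsto (fun k => w' (z (ns k))) Filter.atTop (nhds (w' a.1)) := by
      refine Filter.Tendsto.comp (hcont a.1 haIoc) ?_
      exact tendsto_nhdsWithin_of_tendsto_nhds_of_eventually_within _ hza
        (Filter.Eventually.of_forall fun k => hz (ns k))
    have habs : Filter.Tendsto (fun k => |φ (ns k)|) Filter.atTop (nhds |a.2|) :=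
      (continuous_abs.tendsto _).comp hφa
    have hcos : Filter.Tendsto (fun k => Real.cos (φ (ns k))) Filter.atTop
        (nhds (Real.cos a.2)) := (Real.continuous_cos.tendsto _).comp hφa
    have hsinφ : Filter.Tendsto (fun k => Real.sin (φ (ns k))) Filter.atTop
        (nhds (Real.sin a.2)) := (Real.continuous_sin.tendsto _).comp hφa
    have hF : Filter.Tendsto
        (fun k => ((|φ (ns k)| / π * Real.sin (π * p' / z (ns k)) + 2) * Real.cos (φ (ns k)),
          (|φ (ns k)| / π * Real.sin (π * p' / z (ns k)) + 2) * Real.sin (φ (ns k)),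
          z (ns k), |φ (ns k)| * w' (z (ns k)))) Filter.atTop
        (nhds ((|a.2| / π * Real.sin (π * p' / a.1) + 2) * Real.cos a.2,
          (|a.2| / π * Real.sin (π * p' / a.1) + 2) * Real.sin a.2,
          a.1, |a.2| * w' a.1)) := by
      refine Filter.Tendsto.prodMk_nhds ?_ (Filter.Tendsto.prodMk_nhds ?_
        (Filter.Tendsto.prodMk_nhds hza (habs.mul hwz)))
      · exact (((habs.div_const π).mul hsin).add tendsto_const_nhds).mul hcos
      · exact (((habs.div_const π).mul hsin).add tendsto_const_nhds).mul hsinφ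
    have hyeq' : (fun k => y (ns k)) =
        (fun k => ((|φ (ns k)| / π * Real.sin (π * p' / z (ns k)) + 2) * Real.cos (φ (ns k)),
          (|φ (ns k)| / π * Real.sin (π * p' / z (ns k)) + 2) * Real.sin (φ (ns k)),
          z (ns k), |φ (ns k)| * w' (z (ns k)))) := by
      funext k; exact hyeq (ns k)
    exact tendsto_nhds_unique hyq (hyeq' ▸ hF)

/-- every braided harmonic vase is a compact subset of `ℝ⁴`. -/
theorem BHV_isCompact (p : ℕ → ℝ) (w : ℕ → ℝ → ℝ) (hd : IsBHVData p w) :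
    IsCompact (BHV p w) := by
  have hπ : (0 : ℝ) < π := Real.pi_pos
  have hm : ∀ i : ℕ, (1 : ℝ) / ((i + 1 : ℕ) : ℝ) = 1 / ((i : ℝ) + 1) := by
    intro i; push_cast; ring
  have hwprop : ∀ i : ℕ, ∀ x ∈ Set.Ioc (0 : ℝ) (1 / ((i : ℝ) + 1)),
      0 ≤ w (i + 1) x ∧ w (i + 1) x < x := by
    intro i x hx
    have hi : (1 : ℕ) ≤ i + 1 := Nat.succ_le_succ (Nat.zero_le i)
    have hx' : x ∈ Set.Ioc (0 : ℝ) (1 / ((i + 1 : ℕ) : ℝ)) := by rw [hm i]; exact hx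
    exact ⟨(hd.mapsTo (i + 1) hi x hx').1, hd.lt (i + 1) hi x hx'⟩
  have hwall : ∀ i : ℕ, ∀ q ∈ BHVwall (p (i + 1)) (w (i + 1)) (1 / ((i : ℝ) + 1)),
      q.1 ^ 2 + q.2.1 ^ 2 ≤ 9 ∧ q.2.2.1 ∈ Set.Ioc (0 : ℝ) (1 / ((i : ℝ) + 1)) ∧
        0 ≤ q.2.2.2 ∧ q.2.2.2 ≤ π * q.2.2.1 := by
    intro i q hq
    exact BHVwall_bounds (hwprop i) hq
  have hmle1 : ∀ i : ℕ, (1 : ℝ) / ((i : ℝ) + 1) ≤ 1 := by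
    intro i
    rw [div_le_one (by positivity)]
    have : (0 : ℝ) ≤ (i : ℝ) := Nat.cast_nonneg i
    linarith
  -- the compact box containing everything
  have hKc : IsCompact ((Set.Icc (-3 : ℝ) 3) ×ˢ ((Set.Icc (-3 : ℝ) 3) ×ˢ
      ((Set.Icc (0 : ℝ) 1) ×ˢ (Set.Icc (0 : ℝ) π)))) :=
    isCompact_Icc.prod (isCompact_Icc.prod (isCompact_Icc.prod isCompact_Icc))
  refine IsCompact.of_isClosed_subset hKc ?_ ?_
  · -- closedness, via sequences
    refine IsSeqClosed.isClosed ?_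
    intro u q hu hq
    by_cases hfreq : ∃ᶠ n in Filter.atTop, u n ∈ BHVpedestal
    · obtain ⟨ns, hns, hmem⟩ := Filter.extraction_of_frequently_atTop hfreq
      exact Or.inl (BHVpedestal_isClosed.isSeqClosed hmem (hq.comp hns.tendsto_atTop))
    · have hev : ∀ᶠ n in Filter.atTop,
          u n ∈ ⋃ i : ℕ, BHVwall (p (i + 1)) (w (i + 1)) (1 / ((i : ℝ) + 1)) := by
        filter_upwards [Filter.not_frequently.mp hfreq] with n hn
        exact (hu n).resolve_left hn
      obtain ⟨N, hN⟩ := Filter.eventually_atTop.1 hev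
      set v : ℕ → ℝ × ℝ × ℝ × ℝ := fun n => u (n + N) with hv
      have hvmem : ∀ n, v n ∈ ⋃ i : ℕ,
          BHVwall (p (i + 1)) (w (i + 1)) (1 / ((i : ℝ) + 1)) :=
        fun n => hN (n + N) (Nat.le_add_left _ _)
      have hvq : Filter.Tendsto v Filter.atTop (nhds q) :=
        hq.comp (Filter.tendsto_add_atTop_nat N)
      choose I hI using fun n => Set.mem_iUnion.1 (hvmem n)
      by_cases hI2 : ∃ i, ∃ᶠ n in Filter.atTop, I n = i
      · -- one wall is used infinitely often
        obtain ⟨i, hif⟩ := hI2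
        obtain ⟨ns, hns, hieq⟩ := Filter.extraction_of_frequently_atTop hif
        have hy : ∀ n, v (ns n) ∈ BHVwall (p (i + 1)) (w (i + 1)) (1 / ((i : ℝ) + 1)) := by
          intro n
          have := hI (ns n)
          rwa [hieq n] at this
        have hcont : ContinuousOn (w (i + 1)) (Set.Ioc (0 : ℝ) (1 / ((i : ℝ) + 1))) := by
          have := hd.contOn (i + 1) (Nat.succ_le_succ (Nat.zero_le i))
          rwa [hm i] at this
        have := BHVwall_limit hcont (hwprop i) hy (hvq.comp hns.tendsto_atTop)
        rcases this with h | h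
        · exact Or.inl h
        · exact Or.inr (Set.mem_iUnion.2 ⟨i, h⟩)
      · -- the wall indices tend to infinity : the limit is on the pedestal
        push_neg at hI2
        have hItop : Filter.Tendsto I Filter.atTop Filter.atTop := by
          rw [Filter.tendsto_atTop]
          intro b
          have hb : ∀ᶠ n in Filter.atTop, ∀ j ∈ Finset.range b, I n ≠ j := by
            rw [Filter.eventually_all_finset]
            intro j _
            exact hI2 j
          filter_upwards [hb] with n hn
          by_contra h
          push_neg at h
          exact hn (I n) (Finset.mem_range.2 h) rfl
        have hb := fun n => hwall (I n) _ (hI n)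
        have hup : Filter.Tendsto (fun n => (1 : ℝ) / ((I n : ℝ) + 1)) Filter.atTop (nhds 0) := by
          have h1 : Filter.Tendsto (fun n => ((I n : ℝ) + 1)) Filter.atTop Filter.atTop :=
            (Filter.tendsto_atTop_add_const_right _ 1
              (tendsto_natCast_atTop_atTop.comp hItop))
          simpa [one_div, Pi.inv_def] using h1.inv_tendsto_atTop
        have hz0 : Filter.Tendsto (fun n => (v n).2.2.1) Filter.atTop (nhds 0) :=
          squeeze_zero (fun n => (hb n).2.1.1.le) (fun n => (hb n).2.1.2) hup
        have h40 : Filter.Tendsto (fun n => (v n).2.2.2) Filter.atTop (nhds 0) := by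
          refine squeeze_zero (fun n => (hb n).2.2.1) (fun n => (hb n).2.2.2) ?_
          simpa using hz0.const_mul π
        have h3t : Filter.Tendsto (fun n => (v n).2.2.1) Filter.atTop (nhds q.2.2.1) :=
          ((continuous_fst.comp (continuous_snd.comp continuous_snd)).tendsto q).comp hvq
        have h4t : Filter.Tendsto (fun n => (v n).2.2.2) Filter.atTop (nhds q.2.2.2) :=
          ((continuous_snd.comp (continuous_snd.comp continuous_snd)).tendsto q).comp hvq
        have hcontf : Continuous fun q' : ℝ × ℝ × ℝ × ℝ => q'.1 ^ 2 + q'.2.1 ^ 2 := by fun_prop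
        have hle : q.1 ^ 2 + q.2.1 ^ 2 ≤ 9 :=
          le_of_tendsto ((hcontf.tendsto q).comp hvq)
            (Filter.Eventually.of_forall fun n => (hb n).1)
        exact Or.inl ⟨hle, tendsto_nhds_unique h3t hz0, tendsto_nhds_unique h4t h40⟩
  · -- the vase is contained in the box
    rintro q (hq | hq)
    · obtain ⟨h9, h3, h4⟩ := hq
      refine ⟨⟨?_, ?_⟩, ⟨?_, ?_⟩, ⟨?_, ?_⟩, ?_, ?_⟩ <;>
        first
          | nlinarith [sq_nonneg q.1, sq_nonneg q.2.1]
          | simp [h3, h4, hπ.le]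
    · obtain ⟨i, hqi⟩ := Set.mem_iUnion.1 hq
      obtain ⟨h9, hz, h40, h4π⟩ := hwall i q hqi
      have hzle : q.2.2.1 ≤ 1 := hz.2.trans (hmle1 i)
      refine ⟨⟨?_, ?_⟩, ⟨?_, ?_⟩, ⟨hz.1.le, hzle⟩, h40, ?_⟩
      · nlinarith [sq_nonneg q.2.1]
      · nlinarith [sq_nonneg q.2.1]
      · nlinarith [sq_nonneg q.1]
      · nlinarith [sq_nonneg q.1]
      · calc q.2.2.2 ≤ π * q.2.2.1 := h4π
          _ ≤ π * 1 := by nlinarith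
          _ = π := mul_one π
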